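/- The divided difference operators on R satisfy the braid and nil-Coxeter relations, and commute with each other: for all admissible indices, δ_i² = 0, δ_i δ_j = δ_j δ_i when |i − j| ≥ 2, δ_i δ_{i+1} δ_i = δ_{i+1} δ_i δ_{i+1}; likewise ∂_i² = 0, ∂_i ∂_j = ∂_j ∂_i when |i − j| ≥ 2, ∂_i ∂_{i+1} ∂_i = ∂_{i+1} ∂_i ∂_{i+1}; and δ_i ∂_j = ∂_j δ_i for all i, j. -/

import Mathlib

open MvPolynomial Equiv Finset

noncomputable section

/-- The polynomial ring ℂ[t₁,…,tₙ]. -/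
abbrev Pol (n : ℕ) : Type := MvPolynomial (Fin n) ℂ

/-- The action of a permutation `w` on polynomials by the substitution `tᵢ ↦ t_{w(i)}`. -/
def pact {n : ℕ} (w : Perm (Fin n)) (f : Pol n) : Pol n := rename ⇑w f

/-- The GKM condition defining `R ⊆ ∏_{v ∈ Sₙ} ℂ[t₁,…,tₙ]`: for every `v` and every
transposition `(i j)` with `i < j`, the difference `p(v) − p((i j)v)` is divisible by
`tᵢ − tⱼ`. -/
def GKM (n : ℕ) (p : Perm (Fin n) → Pol n) : Prop :=
  ∀ (v : Perm (Fin n)) (i j : Fin n), i < j →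
    (X i - X j : Pol n) ∣ (p v - p (Equiv.swap i j * v))

/-- The length of a permutation: its number of inversions. -/
def len {n : ℕ} (w : Perm (Fin n)) : ℕ :=
  (Finset.univ.filter fun q : Fin n × Fin n => q.1 < q.2 ∧ w q.2 < w q.1).card

/-- Bruhat order: the partial order generated by `u < (i j) u` whenever `ℓ(u) < ℓ((i j)u)`. -/
def bruhatLE {n : ℕ} : Perm (Fin n) → Perm (Fin n) → Prop :=
  Relation.ReflTransGen
    (fun u v => (∃ i j : Fin n, i < j ∧ v = Equiv.swap i j * u) ∧ len u < len v)

/-- `p` is the canonical class (equivariant Schubert class) of `w`: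
(i) each component is homogeneous of degree `ℓ(w)`; (ii) `p(v) = 0` unless `v ≥ w` in
Bruhat order; (iii) `p(w) = ∏ (tᵢ − tⱼ)` over pairs `i < j` with `ℓ((i j)w) < ℓ(w)`;
and `p` satisfies the GKM conditions. -/
def IsCanonical {n : ℕ} (w : Perm (Fin n)) (p : Perm (Fin n) → Pol n) : Prop :=
  GKM n p ∧
  (∀ v, (p v).IsHomogeneous (len w)) ∧
  (∀ v, ¬ bruhatLE w v → p v = 0) ∧
  p w = ∏ q ∈ Finset.univ.filter
      (fun q : Fin n × Fin n => q.1 < q.2 ∧ len (Equiv.swap q.1 q.2 * w) < len w),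
      (X q.1 - X q.2 : Pol n)

/-- The simple transposition `sᵢ = (i, i+1)`. -/
def sT (n i : ℕ) (h : i + 1 < n) : Perm (Fin n) :=
  Equiv.swap ⟨i, Nat.lt_of_succ_lt h⟩ ⟨i + 1, h⟩

/-- The dot (left) action: `(w·p)(v) = w(p(w⁻¹ v))`. -/
def dot {n : ℕ} (w : Perm (Fin n)) (p : Perm (Fin n) → Pol n) : Perm (Fin n) → Pol n :=
  fun v => pact w (p (w⁻¹ * v))

/-- The star (right) action: `(p * w)(v) = p(vw)`. -/
def starAct {n : ℕ} (p : Perm (Fin n) → Pol n) (w : Perm (Fin n)) :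
    Perm (Fin n) → Pol n :=
  fun v => p (v * w)

/-- `R` as a `ℂ[t₁,…,tₙ]`-submodule of the product. -/
def gkmSubmodule (n : ℕ) : Submodule (Pol n) (Perm (Fin n) → Pol n) where
  carrier := {p | GKM n p}
  add_mem' := by
    intro a b ha hb v i j hij
    have h := dvd_add (ha v i j hij) (hb v i j hij)
    simpa [Pi.add_apply, add_sub_add_comm] using h
  zero_mem' := by
    intro v i j hij
    simp
  smul_mem' := by
    intro c p hp v i j hij
    have h := (hp v i j hij).mul_left c
    simpa [Pi.smul_apply, smul_eq_mul, mul_sub] using h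

/-- The maximal ideal `𝔪 = (t₁,…,tₙ) ⊆ ℂ[t₁,…,tₙ]`. -/
def mIdeal (n : ℕ) : Ideal (Pol n) := Ideal.span (Set.range (X : Fin n → Pol n))

/-- The submodule `𝔪R`: finite sums of products `c • p` with `c ∈ 𝔪` and `p ∈ R`. -/
def mR (n : ℕ) : Submodule (Pol n) (Perm (Fin n) → Pol n) :=
  Submodule.span (Pol n) {q | ∃ c ∈ mIdeal n, ∃ p, GKM n p ∧ q = c • p}

namespace Aux

lemma fne {n a b : ℕ} {ha : a < n} {hb : b < n} (h : a ≠ b) : (⟨a, ha⟩ : Fin n) ≠ ⟨b, hb⟩ := by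
  simpa [Fin.ext_iff] using h

lemma Xne {n : ℕ} {k l : Fin n} (h : k ≠ l) : (X k - X l : Pol n) ≠ 0 :=
  sub_ne_zero_of_ne fun e => h (MvPolynomial.X_injective e)

lemma pact_sub {n : ℕ} (w : Perm (Fin n)) (f g : Pol n) :
    pact w (f - g) = pact w f - pact w g := map_sub (rename (R := ℂ) ⇑w) f g

lemma pact_mul {n : ℕ} (w : Perm (Fin n)) (f g : Pol n) :
    pact w (f * g) = pact w f * pact w g := map_mul (rename (R := ℂ) ⇑w) f g

lemma pact_X {n : ℕ} (w : Perm (Fin n)) (k : Fin n) : pact w (X k) = X (w k) :=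
  rename_X ⇑w k

lemma pact_pact {n : ℕ} (w u : Perm (Fin n)) (f : Pol n) :
    pact w (pact u f) = pact (w * u) f := by
  show rename ⇑w (rename ⇑u f) = rename ⇑(w * u) f
  rw [rename_rename]; rfl

lemma pact_one {n : ℕ} (f : Pol n) : pact 1 f = f := by
  show rename ⇑(1 : Perm (Fin n)) f = f
  rw [Equiv.Perm.coe_one, rename_id, AlgHom.id_apply]

lemma pact_eqn {n : ℕ} (w s : Perm (Fin n)) (p q : Perm (Fin n) → Pol n) (c : Pol n)
    (u : Perm (Fin n)) (h : p u - pact s (p (s * u)) = c * q u) :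
    pact w (p u) - pact (w * s) (p (s * u)) = pact w c * pact w (q u) := by
  have h2 := congrArg (pact w) h
  rwa [pact_sub, pact_mul, pact_pact] at h2

lemma sT_mul_self {n i : ℕ} (h : i + 1 < n) : sT n i h * sT n i h = 1 :=
  Equiv.swap_mul_self _ _

lemma sT_comm {n i j : ℕ} (h1 : i + 1 < n) (h2 : j + 1 < n) (h : i + 2 ≤ j) :
    sT n i h1 * sT n j h2 = sT n j h2 * sT n i h1 := by
  show Equiv.swap _ _ * Equiv.swap _ _ = _
  rw [Equiv.mul_swap_eq_swap_mul,
    Equiv.swap_apply_of_ne_of_ne (fne (by omega)) (fne (by omega)),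
    Equiv.swap_apply_of_ne_of_ne (fne (by omega)) (fne (by omega))]
  rfl

lemma sT_braid {n i : ℕ} (h1 : i + 1 < n) (h2 : i + 1 + 1 < n) :
    sT n i h1 * sT n (i+1) h2 * sT n i h1 = sT n (i+1) h2 * sT n i h1 * sT n (i+1) h2 := by
  have l0 : i < n := by omega
  set x : Fin n := ⟨i, l0⟩
  set y : Fin n := ⟨i+1, Nat.lt_of_succ_lt h2⟩
  set z : Fin n := ⟨i+1+1, h2⟩
  have hxy : x ≠ y := fne (by omega)
  have hxz : x ≠ z := fne (by omega)
  have hzy : z ≠ y := fne (by omega)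
  have hzx : z ≠ x := fne (by omega)
  have e1 := Equiv.swap_mul_swap_mul_swap hzy hzx
  have e2 := Equiv.swap_mul_swap_mul_swap hxy hxz
  rw [Equiv.swap_comm y x, Equiv.swap_comm z y] at e1
  show Equiv.swap x y * Equiv.swap y z * Equiv.swap x y
      = Equiv.swap y z * Equiv.swap x y * Equiv.swap y z
  rw [e1, e2, Equiv.swap_comm]

end Aux

lemma dl_comm_aux {n : ℕ}
    (Dl : ∀ i : ℕ, i + 1 < n → (Perm (Fin n) → Pol n) → (Perm (Fin n) → Pol n))
    (hDl : ∀ (i : ℕ) (hi : i + 1 < n) (p), GKM n p → GKM n (Dl i hi p) ∧ ∀ v,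
        p v - pact (sT n i hi) (p (sT n i hi * v))
          = (X ⟨i, Nat.lt_of_succ_lt hi⟩ - X ⟨i + 1, hi⟩ : Pol n) * Dl i hi p v)
    (i j : ℕ) (hi : i + 1 < n) (hj : j + 1 < n) (hij : i + 2 ≤ j) (p : Perm (Fin n) → Pol n)
    (hp : GKM n p) : Dl i hi (Dl j hj p) = Dl j hj (Dl i hi p) := by
  have l0i : i < n := by omega
  have l0j : j < n := by omega
  obtain ⟨gq, eq'⟩ := hDl j hj p hp
  obtain ⟨-, e2'⟩ := hDl i hi _ gq
  obtain ⟨gr, fr'⟩ := hDl i hi p hp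
  obtain ⟨-, f2'⟩ := hDl j hj _ gr
  set s := sT n i hi with hsdef
  set t := sT n j hj with htdef
  have hcomm : s * t = t * s := Aux.sT_comm hi hj hij
  have hsxj : s (⟨j, l0j⟩ : Fin n) = ⟨j, l0j⟩ :=
    Equiv.swap_apply_of_ne_of_ne (Aux.fne (by omega)) (Aux.fne (by omega))
  have hsxj1 : s (⟨j+1, hj⟩ : Fin n) = ⟨j+1, hj⟩ :=
    Equiv.swap_apply_of_ne_of_ne (Aux.fne (by omega)) (Aux.fne (by omega))
  have htxi : t (⟨i, l0i⟩ : Fin n) = ⟨i, l0i⟩ :=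
    Equiv.swap_apply_of_ne_of_ne (Aux.fne (by omega)) (Aux.fne (by omega))
  have htxi1 : t (⟨i+1, hi⟩ : Fin n) = ⟨i+1, hi⟩ :=
    Equiv.swap_apply_of_ne_of_ne (Aux.fne (by omega)) (Aux.fne (by omega))
  have E : ∀ u, p u - pact t (p (t * u))
      = (X ⟨j, l0j⟩ - X ⟨j+1, hj⟩ : Pol n) * Dl j hj p u := eq'
  have F : ∀ u, p u - pact s (p (s * u))
      = (X ⟨i, l0i⟩ - X ⟨i+1, hi⟩ : Pol n) * Dl i hi p u := fr'
  funext v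
  have H1 : Dl j hj p v - pact s (Dl j hj p (s * v))
      = (X ⟨i, l0i⟩ - X ⟨i+1, hi⟩ : Pol n) * Dl i hi (Dl j hj p) v := e2' v
  have H2 := E v
  have H3 : pact s (p (s * v)) - pact (s * t) (p (s * t * v))
      = (X ⟨j, l0j⟩ - X ⟨j+1, hj⟩ : Pol n) * pact s (Dl j hj p (s * v)) := by
    have h := Aux.pact_eqn s t p (Dl j hj p) _ (s * v) (E (s * v))
    rw [← mul_assoc, ← hcomm, Aux.pact_sub, Aux.pact_X, Aux.pact_X, hsxj, hsxj1] at h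
    exact h
  have K1 : Dl i hi p v - pact t (Dl i hi p (t * v))
      = (X ⟨j, l0j⟩ - X ⟨j+1, hj⟩ : Pol n) * Dl j hj (Dl i hi p) v := f2' v
  have K2 := F v
  have K3 : pact t (p (t * v)) - pact (s * t) (p (s * t * v))
      = (X ⟨i, l0i⟩ - X ⟨i+1, hi⟩ : Pol n) * pact t (Dl i hi p (t * v)) := by
    have h := Aux.pact_eqn t s p (Dl i hi p) _ (t * v) (F (t * v))
    rw [← mul_assoc, ← hcomm, Aux.pact_sub, Aux.pact_X, Aux.pact_X, htxi, htxi1] at h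
    exact h
  have key : ((X ⟨i, l0i⟩ - X ⟨i+1, hi⟩ : Pol n) * (X ⟨j, l0j⟩ - X ⟨j+1, hj⟩))
        * Dl i hi (Dl j hj p) v
      = ((X ⟨i, l0i⟩ - X ⟨i+1, hi⟩ : Pol n) * (X ⟨j, l0j⟩ - X ⟨j+1, hj⟩))
        * Dl j hj (Dl i hi p) v := by
    linear_combination (-(X ⟨j, l0j⟩ - X ⟨j+1, hj⟩ : Pol n)) * H1 - H2 + H3
      + (X ⟨i, l0i⟩ - X ⟨i+1, hi⟩ : Pol n) * K1 + K2 - K3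
  exact mul_left_cancel₀
    (mul_ne_zero (Aux.Xne (Aux.fne (by omega))) (Aux.Xne (Aux.fne (by omega)))) key

lemma dr_comm_aux {n : ℕ}
    (Dr : ∀ i : ℕ, i + 1 < n → (Perm (Fin n) → Pol n) → (Perm (Fin n) → Pol n))
    (hDr : ∀ (i : ℕ) (hi : i + 1 < n) (p), GKM n p → GKM n (Dr i hi p) ∧ ∀ v,
        p v - p (v * sT n i hi)
          = (X (v ⟨i + 1, hi⟩) - X (v ⟨i, Nat.lt_of_succ_lt hi⟩) : Pol n) * Dr i hi p v)
    (i j : ℕ) (hi : i + 1 < n) (hj : j + 1 < n) (hij : i + 2 ≤ j) (p : Perm (Fin n) → Pol n)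
    (hp : GKM n p) : Dr i hi (Dr j hj p) = Dr j hj (Dr i hi p) := by
  have l0i : i < n := by omega
  have l0j : j < n := by omega
  obtain ⟨gq, eq'⟩ := hDr j hj p hp
  obtain ⟨-, e2'⟩ := hDr i hi _ gq
  obtain ⟨gr, fr'⟩ := hDr i hi p hp
  obtain ⟨-, f2'⟩ := hDr j hj _ gr
  set s := sT n i hi with hsdef
  set t := sT n j hj with htdef
  have hsxj : s (⟨j, l0j⟩ : Fin n) = ⟨j, l0j⟩ :=
    Equiv.swap_apply_of_ne_of_ne (Aux.fne (by omega)) (Aux.fne (by omega))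
  have hsxj1 : s (⟨j+1, hj⟩ : Fin n) = ⟨j+1, hj⟩ :=
    Equiv.swap_apply_of_ne_of_ne (Aux.fne (by omega)) (Aux.fne (by omega))
  have htxi : t (⟨i, l0i⟩ : Fin n) = ⟨i, l0i⟩ :=
    Equiv.swap_apply_of_ne_of_ne (Aux.fne (by omega)) (Aux.fne (by omega))
  have htxi1 : t (⟨i+1, hi⟩ : Fin n) = ⟨i+1, hi⟩ :=
    Equiv.swap_apply_of_ne_of_ne (Aux.fne (by omega)) (Aux.fne (by omega))
  have E : ∀ u, p u - p (u * t)
      = (X (u ⟨j+1, hj⟩) - X (u ⟨j, l0j⟩) : Pol n) * Dr j hj p u := eq'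
  have F : ∀ u, p u - p (u * s)
      = (X (u ⟨i+1, hi⟩) - X (u ⟨i, l0i⟩) : Pol n) * Dr i hi p u := fr'
  funext v
  have hvcomm : v * s * t = v * t * s := by
    rw [mul_assoc, mul_assoc, Aux.sT_comm hi hj hij]
  have H1 : Dr j hj p v - Dr j hj p (v * s)
      = (X (v ⟨i+1, hi⟩) - X (v ⟨i, l0i⟩) : Pol n) * Dr i hi (Dr j hj p) v := e2' v
  have H2 := E v
  have H3 : p (v * s) - p (v * s * t)
      = (X (v ⟨j+1, hj⟩) - X (v ⟨j, l0j⟩) : Pol n) * Dr j hj p (v * s) := by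
    have h := E (v * s)
    rw [Perm.mul_apply, Perm.mul_apply, hsxj, hsxj1] at h
    exact h
  have K1 : Dr i hi p v - Dr i hi p (v * t)
      = (X (v ⟨j+1, hj⟩) - X (v ⟨j, l0j⟩) : Pol n) * Dr j hj (Dr i hi p) v := f2' v
  have K2 := F v
  have K3 : p (v * t) - p (v * s * t)
      = (X (v ⟨i+1, hi⟩) - X (v ⟨i, l0i⟩) : Pol n) * Dr i hi p (v * t) := by
    have h := F (v * t)
    rw [Perm.mul_apply, Perm.mul_apply, htxi, htxi1, ← hvcomm] at h
    exact h
  have key : ((X (v ⟨i+1, hi⟩) - X (v ⟨i, l0i⟩) : Pol n) * (X (v ⟨j+1, hj⟩) - X (v ⟨j, l0j⟩)))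
        * Dr i hi (Dr j hj p) v
      = ((X (v ⟨i+1, hi⟩) - X (v ⟨i, l0i⟩) : Pol n) * (X (v ⟨j+1, hj⟩) - X (v ⟨j, l0j⟩)))
        * Dr j hj (Dr i hi p) v := by
    linear_combination (-(X (v ⟨j+1, hj⟩) - X (v ⟨j, l0j⟩) : Pol n)) * H1 - H2 + H3
      + (X (v ⟨i+1, hi⟩) - X (v ⟨i, l0i⟩) : Pol n) * K1 + K2 - K3
  exact mul_left_cancel₀
    (mul_ne_zero (Aux.Xne (v.injective.ne (Aux.fne (by omega))))
      (Aux.Xne (v.injective.ne (Aux.fne (by omega))))) key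

/-- the divided difference operators on `R` satisfy the nil-Coxeter and
braid relations, and `δᵢ` commutes with `∂ⱼ`.  Here `Dl i` is `δᵢ` and `Dr i` is `∂ᵢ`,
given together with their componentwise defining equations and the fact (Statements 6, 7)
that they map `R` to `R`. -/
theorem divided_difference_braid_relations (n : ℕ) (hn : 1 ≤ n)
    (Dl Dr : ∀ i : ℕ, i + 1 < n → (Perm (Fin n) → Pol n) → (Perm (Fin n) → Pol n))
    (hDl : ∀ (i : ℕ) (hi : i + 1 < n) (p), GKM n p → GKM n (Dl i hi p) ∧ ∀ v,
        p v - pact (sT n i hi) (p (sT n i hi * v))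
          = (X ⟨i, by omega⟩ - X ⟨i + 1, hi⟩ : Pol n) * Dl i hi p v)
    (hDr : ∀ (i : ℕ) (hi : i + 1 < n) (p), GKM n p → GKM n (Dr i hi p) ∧ ∀ v,
        p v - p (v * sT n i hi)
          = (X (v ⟨i + 1, hi⟩) - X (v ⟨i, by omega⟩) : Pol n) * Dr i hi p v) :
    (∀ (i : ℕ) (hi : i + 1 < n) (p), GKM n p → Dl i hi (Dl i hi p) = 0) ∧
    (∀ (i j : ℕ) (hi : i + 1 < n) (hj : j + 1 < n), i + 2 ≤ j ∨ j + 2 ≤ i →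
      ∀ p, GKM n p → Dl i hi (Dl j hj p) = Dl j hj (Dl i hi p)) ∧
    (∀ (i : ℕ) (hi : i + 2 < n) (p), GKM n p →
      Dl i (by omega) (Dl (i + 1) hi (Dl i (by omega) p))
        = Dl (i + 1) hi (Dl i (by omega) (Dl (i + 1) hi p))) ∧
    (∀ (i : ℕ) (hi : i + 1 < n) (p), GKM n p → Dr i hi (Dr i hi p) = 0) ∧
    (∀ (i j : ℕ) (hi : i + 1 < n) (hj : j + 1 < n), i + 2 ≤ j ∨ j + 2 ≤ i →
      ∀ p, GKM n p → Dr i hi (Dr j hj p) = Dr j hj (Dr i hi p)) ∧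
    (∀ (i : ℕ) (hi : i + 2 < n) (p), GKM n p →
      Dr i (by omega) (Dr (i + 1) hi (Dr i (by omega) p))
        = Dr (i + 1) hi (Dr i (by omega) (Dr (i + 1) hi p))) ∧
    (∀ (i j : ℕ) (hi : i + 1 < n) (hj : j + 1 < n) (p), GKM n p →
      Dl i hi (Dr j hj p) = Dr j hj (Dl i hi p)) := by
  refine ⟨?_, ?_, ?_, ?_, ?_, ?_, ?_⟩
  -- Part 1 : δᵢ² = 0
  · intro i hi p hp
    have l0 : i < n := by omega
    obtain ⟨g1, e1'⟩ := hDl i hi p hp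
    obtain ⟨-, e2'⟩ := hDl i hi _ g1
    set s := sT n i hi with hsdef
    have hss : s * s = 1 := Aux.sT_mul_self hi
    have hsl : s (⟨i, l0⟩ : Fin n) = ⟨i+1, hi⟩ := Equiv.swap_apply_left _ _
    have hsr : s (⟨i+1, hi⟩ : Fin n) = ⟨i, l0⟩ := Equiv.swap_apply_right _ _
    have E1 : ∀ u, p u - pact s (p (s * u))
        = (X ⟨i, l0⟩ - X ⟨i+1, hi⟩ : Pol n) * Dl i hi p u := e1'
    funext v
    show Dl i hi (Dl i hi p) v = 0
    have H4 := E1 v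
    have Hn : Dl i hi p v - pact s (Dl i hi p (s * v))
        = (X ⟨i, l0⟩ - X ⟨i+1, hi⟩ : Pol n) * Dl i hi (Dl i hi p) v := e2' v
    have H6 : pact s (p (s * v)) - p v
        = (X ⟨i+1, hi⟩ - X ⟨i, l0⟩ : Pol n) * pact s (Dl i hi p (s * v)) := by
      have h := Aux.pact_eqn s s p (Dl i hi p) _ (s * v) (E1 (s * v))
      rw [← mul_assoc, hss, Aux.pact_one, one_mul, Aux.pact_sub, Aux.pact_X, Aux.pact_X,
        hsl, hsr] at h
      exact h
    have key : ((X ⟨i, l0⟩ - X ⟨i+1, hi⟩ : Pol n) * (X ⟨i, l0⟩ - X ⟨i+1, hi⟩))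
        * Dl i hi (Dl i hi p) v = 0 := by
      linear_combination (-(X ⟨i, l0⟩ - X ⟨i+1, hi⟩ : Pol n)) * Hn - H4 - H6
    have hne : ((X ⟨i, l0⟩ - X ⟨i+1, hi⟩ : Pol n) * (X ⟨i, l0⟩ - X ⟨i+1, hi⟩)) ≠ 0 :=
      mul_ne_zero (Aux.Xne (Aux.fne (by omega))) (Aux.Xne (Aux.fne (by omega)))
    exact (mul_eq_zero.mp key).resolve_left hne
  -- Part 2 : δᵢδⱼ = δⱼδᵢ
  · intro i j hi hj hij p hp
    rcases hij with h | h
    · exact dl_comm_aux Dl hDl i j hi hj h p hp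
    · exact (dl_comm_aux Dl hDl j i hj hi h p hp).symm
  -- Part 3 : left braid
  · intro i hi p hp
    have l0 : i < n := by omega
    have l1 : i + 1 < n := by omega
    obtain ⟨g1, e1'⟩ := hDl i l1 p hp
    obtain ⟨g2, e2'⟩ := hDl (i+1) hi _ g1
    obtain ⟨-, e3'⟩ := hDl i l1 _ g2
    obtain ⟨k1, f1'⟩ := hDl (i+1) hi p hp
    obtain ⟨k2, f2'⟩ := hDl i l1 _ k1
    obtain ⟨-, f3'⟩ := hDl (i+1) hi _ k2
    set s := sT n i l1 with hsdef
    set t := sT n (i+1) hi with htdef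
    have hss : s * s = 1 := Aux.sT_mul_self l1
    have htt : t * t = 1 := Aux.sT_mul_self hi
    have hb : s * t * s = t * s * t := Aux.sT_braid l1 hi
    have hsx : s (⟨i, l0⟩ : Fin n) = ⟨i+1, l1⟩ := Equiv.swap_apply_left _ _
    have hsy : s (⟨i+1, l1⟩ : Fin n) = ⟨i, l0⟩ := Equiv.swap_apply_right _ _
    have hsz : s (⟨i+1+1, hi⟩ : Fin n) = ⟨i+1+1, hi⟩ :=
      Equiv.swap_apply_of_ne_of_ne (Aux.fne (by omega)) (Aux.fne (by omega))
    have htx : t (⟨i, l0⟩ : Fin n) = ⟨i, l0⟩ :=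
      Equiv.swap_apply_of_ne_of_ne (Aux.fne (by omega)) (Aux.fne (by omega))
    have hty : t (⟨i+1, l1⟩ : Fin n) = ⟨i+1+1, hi⟩ := Equiv.swap_apply_left _ _
    have htz : t (⟨i+1+1, hi⟩ : Fin n) = ⟨i+1, l1⟩ := Equiv.swap_apply_right _ _
    have E1 : ∀ u, p u - pact s (p (s * u))
        = (X ⟨i, l0⟩ - X ⟨i+1, l1⟩ : Pol n) * Dl i l1 p u := e1'
    have E2 : ∀ u, Dl i l1 p u - pact t (Dl i l1 p (t * u))
        = (X ⟨i+1, l1⟩ - X ⟨i+1+1, hi⟩ : Pol n) * Dl (i+1) hi (Dl i l1 p) u := e2'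
    have E3 : ∀ u, Dl (i+1) hi (Dl i l1 p) u - pact s (Dl (i+1) hi (Dl i l1 p) (s * u))
        = (X ⟨i, l0⟩ - X ⟨i+1, l1⟩ : Pol n) * Dl i l1 (Dl (i+1) hi (Dl i l1 p)) u := e3'
    have F1 : ∀ u, p u - pact t (p (t * u))
        = (X ⟨i+1, l1⟩ - X ⟨i+1+1, hi⟩ : Pol n) * Dl (i+1) hi p u := f1'
    have F2 : ∀ u, Dl (i+1) hi p u - pact s (Dl (i+1) hi p (s * u))
        = (X ⟨i, l0⟩ - X ⟨i+1, l1⟩ : Pol n) * Dl i l1 (Dl (i+1) hi p) u := f2'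
    have F3 : ∀ u, Dl i l1 (Dl (i+1) hi p) u - pact t (Dl i l1 (Dl (i+1) hi p) (t * u))
        = (X ⟨i+1, l1⟩ - X ⟨i+1+1, hi⟩ : Pol n)
          * Dl (i+1) hi (Dl i l1 (Dl (i+1) hi p)) u := f3'
    funext v
    show Dl i l1 (Dl (i+1) hi (Dl i l1 p)) v = Dl (i+1) hi (Dl i l1 (Dl (i+1) hi p)) v
    have H1 := E3 v
    have H2 := E2 v
    have H3 : pact s (Dl i l1 p (s * v)) - pact (s * t) (Dl i l1 p (t * s * v))
        = (X ⟨i, l0⟩ - X ⟨i+1+1, hi⟩ : Pol n)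
          * pact s (Dl (i+1) hi (Dl i l1 p) (s * v)) := by
      have h := Aux.pact_eqn s t (Dl i l1 p) (Dl (i+1) hi (Dl i l1 p)) _ (s * v) (E2 (s * v))
      rw [← mul_assoc, Aux.pact_sub, Aux.pact_X, Aux.pact_X, hsy, hsz] at h
      exact h
    have H4 := E1 v
    have H5 : pact t (p (t * v)) - pact (t * s) (p (s * t * v))
        = (X ⟨i, l0⟩ - X ⟨i+1+1, hi⟩ : Pol n) * pact t (Dl i l1 p (t * v)) := by
      have h := Aux.pact_eqn t s p (Dl i l1 p) _ (t * v) (E1 (t * v))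
      rw [← mul_assoc, Aux.pact_sub, Aux.pact_X, Aux.pact_X, htx, hty] at h
      exact h
    have H6 : pact s (p (s * v)) - p v
        = (X ⟨i+1, l1⟩ - X ⟨i, l0⟩ : Pol n) * pact s (Dl i l1 p (s * v)) := by
      have h := Aux.pact_eqn s s p (Dl i l1 p) _ (s * v) (E1 (s * v))
      rw [← mul_assoc, hss, Aux.pact_one, one_mul, Aux.pact_sub, Aux.pact_X, Aux.pact_X,
        hsx, hsy] at h
      exact h
    have H7 : pact (s * t) (p (t * s * v)) - pact (s * t * s) (p (s * t * s * v))
        = (X ⟨i+1, l1⟩ - X ⟨i+1+1, hi⟩ : Pol n) * pact (s * t) (Dl i l1 p (t * s * v)) := by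
      have h := Aux.pact_eqn (s * t) s p (Dl i l1 p) _ (t * s * v) (E1 (t * s * v))
      simp only [← mul_assoc] at h
      rw [Aux.pact_sub, Aux.pact_X, Aux.pact_X, Perm.mul_apply, Perm.mul_apply,
        htx, hsx, hty, hsz] at h
      exact h
    have K1 := F3 v
    have K2 := F2 v
    have K3 : pact t (Dl (i+1) hi p (t * v)) - pact (t * s) (Dl (i+1) hi p (s * t * v))
        = (X ⟨i, l0⟩ - X ⟨i+1+1, hi⟩ : Pol n)
          * pact t (Dl i l1 (Dl (i+1) hi p) (t * v)) := by
      have h := Aux.pact_eqn t s (Dl (i+1) hi p) (Dl i l1 (Dl (i+1) hi p)) _ (t * v)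
        (F2 (t * v))
      rw [← mul_assoc, Aux.pact_sub, Aux.pact_X, Aux.pact_X, htx, hty] at h
      exact h
    have K4 := F1 v
    have K5 : pact s (p (s * v)) - pact (s * t) (p (t * s * v))
        = (X ⟨i, l0⟩ - X ⟨i+1+1, hi⟩ : Pol n) * pact s (Dl (i+1) hi p (s * v)) := by
      have h := Aux.pact_eqn s t p (Dl (i+1) hi p) _ (s * v) (F1 (s * v))
      rw [← mul_assoc, Aux.pact_sub, Aux.pact_X, Aux.pact_X, hsy, hsz] at h
      exact h
    have K6 : pact t (p (t * v)) - p v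
        = (X ⟨i+1+1, hi⟩ - X ⟨i+1, l1⟩ : Pol n) * pact t (Dl (i+1) hi p (t * v)) := by
      have h := Aux.pact_eqn t t p (Dl (i+1) hi p) _ (t * v) (F1 (t * v))
      rw [← mul_assoc, htt, Aux.pact_one, one_mul, Aux.pact_sub, Aux.pact_X, Aux.pact_X,
        hty, htz] at h
      exact h
    have K7 : pact (t * s) (p (s * t * v)) - pact (s * t * s) (p (s * t * s * v))
        = (X ⟨i, l0⟩ - X ⟨i+1, l1⟩ : Pol n) * pact (t * s) (Dl (i+1) hi p (s * t * v)) := by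
      have h := Aux.pact_eqn (t * s) t p (Dl (i+1) hi p) _ (s * t * v) (F1 (s * t * v))
      simp only [← mul_assoc] at h
      rw [← hb, Aux.pact_sub, Aux.pact_X, Aux.pact_X, Perm.mul_apply, Perm.mul_apply,
        hsy, htx, hsz, htz] at h
      exact h
    have key : ((X ⟨i, l0⟩ - X ⟨i+1, l1⟩ : Pol n) * (X ⟨i, l0⟩ - X ⟨i+1, l1⟩)
          * (X ⟨i+1, l1⟩ - X ⟨i+1+1, hi⟩) * (X ⟨i+1, l1⟩ - X ⟨i+1+1, hi⟩)
          * (X ⟨i, l0⟩ - X ⟨i+1+1, hi⟩))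
          * Dl i l1 (Dl (i+1) hi (Dl i l1 p)) v
        = ((X ⟨i, l0⟩ - X ⟨i+1, l1⟩ : Pol n) * (X ⟨i, l0⟩ - X ⟨i+1, l1⟩)
          * (X ⟨i+1, l1⟩ - X ⟨i+1+1, hi⟩) * (X ⟨i+1, l1⟩ - X ⟨i+1+1, hi⟩)
          * (X ⟨i, l0⟩ - X ⟨i+1+1, hi⟩))
          * Dl (i+1) hi (Dl i l1 (Dl (i+1) hi p)) v := by
      linear_combination
        (-(X ⟨i+1, l1⟩ - X ⟨i+1+1, hi⟩ : Pol n)) *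
          ((X ⟨i, l0⟩ - X ⟨i+1, l1⟩ : Pol n) * (X ⟨i+1, l1⟩ - X ⟨i+1+1, hi⟩)
              * (X ⟨i, l0⟩ - X ⟨i+1+1, hi⟩) * H1
            + (X ⟨i, l0⟩ - X ⟨i+1, l1⟩ : Pol n) * (X ⟨i, l0⟩ - X ⟨i+1+1, hi⟩) * H2
            - (X ⟨i, l0⟩ - X ⟨i+1, l1⟩ : Pol n) * (X ⟨i+1, l1⟩ - X ⟨i+1+1, hi⟩) * H3
            + (X ⟨i, l0⟩ - X ⟨i+1+1, hi⟩ : Pol n) * H4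
            - (X ⟨i, l0⟩ - X ⟨i+1, l1⟩ : Pol n) * H5
            + (X ⟨i+1, l1⟩ - X ⟨i+1+1, hi⟩ : Pol n) * H6
            + (X ⟨i, l0⟩ - X ⟨i+1, l1⟩ : Pol n) * H7)
        + (X ⟨i, l0⟩ - X ⟨i+1, l1⟩ : Pol n) *
          ((X ⟨i, l0⟩ - X ⟨i+1, l1⟩ : Pol n) * (X ⟨i+1, l1⟩ - X ⟨i+1+1, hi⟩)
              * (X ⟨i, l0⟩ - X ⟨i+1+1, hi⟩) * K1
            + (X ⟨i+1, l1⟩ - X ⟨i+1+1, hi⟩ : Pol n) * (X ⟨i, l0⟩ - X ⟨i+1+1, hi⟩) * K2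
            - (X ⟨i, l0⟩ - X ⟨i+1, l1⟩ : Pol n) * (X ⟨i+1, l1⟩ - X ⟨i+1+1, hi⟩) * K3
            + (X ⟨i, l0⟩ - X ⟨i+1+1, hi⟩ : Pol n) * K4
            - (X ⟨i+1, l1⟩ - X ⟨i+1+1, hi⟩ : Pol n) * K5
            + (X ⟨i, l0⟩ - X ⟨i+1, l1⟩ : Pol n) * K6
            + (X ⟨i+1, l1⟩ - X ⟨i+1+1, hi⟩ : Pol n) * K7)
    refine mul_left_cancel₀ ?_ key
    have hA : (X ⟨i, l0⟩ - X ⟨i+1, l1⟩ : Pol n) ≠ 0 := Aux.Xne (Aux.fne (by omega))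
    have hB : (X ⟨i+1, l1⟩ - X ⟨i+1+1, hi⟩ : Pol n) ≠ 0 := Aux.Xne (Aux.fne (by omega))
    have hC : (X ⟨i, l0⟩ - X ⟨i+1+1, hi⟩ : Pol n) ≠ 0 := Aux.Xne (Aux.fne (by omega))
    exact mul_ne_zero (mul_ne_zero (mul_ne_zero (mul_ne_zero hA hA) hB) hB) hC
  -- Part 4 : ∂ᵢ² = 0
  · intro i hi p hp
    have l0 : i < n := by omega
    obtain ⟨g1, e1'⟩ := hDr i hi p hp
    obtain ⟨-, e2'⟩ := hDr i hi _ g1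
    set s := sT n i hi with hsdef
    have hsl : s (⟨i, l0⟩ : Fin n) = ⟨i+1, hi⟩ := Equiv.swap_apply_left _ _
    have hsr : s (⟨i+1, hi⟩ : Fin n) = ⟨i, l0⟩ := Equiv.swap_apply_right _ _
    have E1 : ∀ u, p u - p (u * s)
        = (X (u ⟨i+1, hi⟩) - X (u ⟨i, l0⟩) : Pol n) * Dr i hi p u := e1'
    funext v
    show Dr i hi (Dr i hi p) v = 0
    have hvss : v * s * s = v := by rw [mul_assoc, Aux.sT_mul_self hi, mul_one]
    have A1 := E1 v
    have A2 : p (v * s) - p v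
        = (X (v ⟨i, l0⟩) - X (v ⟨i+1, hi⟩) : Pol n) * Dr i hi p (v * s) := by
      have h := E1 (v * s)
      rw [hvss, Perm.mul_apply, Perm.mul_apply, hsl, hsr] at h
      exact h
    have A3 : Dr i hi p v - Dr i hi p (v * s)
        = (X (v ⟨i+1, hi⟩) - X (v ⟨i, l0⟩) : Pol n) * Dr i hi (Dr i hi p) v := e2' v
    have key : ((X (v ⟨i+1, hi⟩) - X (v ⟨i, l0⟩) : Pol n)
          * (X (v ⟨i+1, hi⟩) - X (v ⟨i, l0⟩))) * Dr i hi (Dr i hi p) v = 0 := by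
      linear_combination (-(X (v ⟨i+1, hi⟩) - X (v ⟨i, l0⟩) : Pol n)) * A3 - A1 - A2
    have hne : ((X (v ⟨i+1, hi⟩) - X (v ⟨i, l0⟩) : Pol n)
          * (X (v ⟨i+1, hi⟩) - X (v ⟨i, l0⟩))) ≠ 0 :=
      mul_ne_zero (Aux.Xne (v.injective.ne (Aux.fne (by omega))))
        (Aux.Xne (v.injective.ne (Aux.fne (by omega))))
    exact (mul_eq_zero.mp key).resolve_left hne
  -- Part 5 : ∂ᵢ∂ⱼ = ∂ⱼ∂ᵢ
  · intro i j hi hj hij p hp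
    rcases hij with h | h
    · exact dr_comm_aux Dr hDr i j hi hj h p hp
    · exact (dr_comm_aux Dr hDr j i hj hi h p hp).symm
  -- Part 6 : right braid
  · intro i hi p hp
    have l0 : i < n := by omega
    have l1 : i + 1 < n := by omega
    obtain ⟨g1, e1'⟩ := hDr i l1 p hp
    obtain ⟨g2, e2'⟩ := hDr (i+1) hi _ g1
    obtain ⟨-, e3'⟩ := hDr i l1 _ g2
    obtain ⟨k1, f1'⟩ := hDr (i+1) hi p hp
    obtain ⟨k2, f2'⟩ := hDr i l1 _ k1
    obtain ⟨-, f3'⟩ := hDr (i+1) hi _ k2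
    set s := sT n i l1 with hsdef
    set t := sT n (i+1) hi with htdef
    have hsx : s (⟨i, l0⟩ : Fin n) = ⟨i+1, l1⟩ := Equiv.swap_apply_left _ _
    have hsy : s (⟨i+1, l1⟩ : Fin n) = ⟨i, l0⟩ := Equiv.swap_apply_right _ _
    have hsz : s (⟨i+1+1, hi⟩ : Fin n) = ⟨i+1+1, hi⟩ :=
      Equiv.swap_apply_of_ne_of_ne (Aux.fne (by omega)) (Aux.fne (by omega))
    have htx : t (⟨i, l0⟩ : Fin n) = ⟨i, l0⟩ :=
      Equiv.swap_apply_of_ne_of_ne (Aux.fne (by omega)) (Aux.fne (by omega))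
    have hty : t (⟨i+1, l1⟩ : Fin n) = ⟨i+1+1, hi⟩ := Equiv.swap_apply_left _ _
    have htz : t (⟨i+1+1, hi⟩ : Fin n) = ⟨i+1, l1⟩ := Equiv.swap_apply_right _ _
    have E1 : ∀ u, p u - p (u * s)
        = (X (u ⟨i+1, l1⟩) - X (u ⟨i, l0⟩) : Pol n) * Dr i l1 p u := e1'
    have E2 : ∀ u, Dr i l1 p u - Dr i l1 p (u * t)
        = (X (u ⟨i+1+1, hi⟩) - X (u ⟨i+1, l1⟩) : Pol n) * Dr (i+1) hi (Dr i l1 p) u := e2'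
    have E3 : ∀ u, Dr (i+1) hi (Dr i l1 p) u - Dr (i+1) hi (Dr i l1 p) (u * s)
        = (X (u ⟨i+1, l1⟩) - X (u ⟨i, l0⟩) : Pol n)
          * Dr i l1 (Dr (i+1) hi (Dr i l1 p)) u := e3'
    have F1 : ∀ u, p u - p (u * t)
        = (X (u ⟨i+1+1, hi⟩) - X (u ⟨i+1, l1⟩) : Pol n) * Dr (i+1) hi p u := f1'
    have F2 : ∀ u, Dr (i+1) hi p u - Dr (i+1) hi p (u * s)
        = (X (u ⟨i+1, l1⟩) - X (u ⟨i, l0⟩) : Pol n) * Dr i l1 (Dr (i+1) hi p) u := f2'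
    have F3 : ∀ u, Dr i l1 (Dr (i+1) hi p) u - Dr i l1 (Dr (i+1) hi p) (u * t)
        = (X (u ⟨i+1+1, hi⟩) - X (u ⟨i+1, l1⟩) : Pol n)
          * Dr (i+1) hi (Dr i l1 (Dr (i+1) hi p)) u := f3'
    funext v
    show Dr i l1 (Dr (i+1) hi (Dr i l1 p)) v = Dr (i+1) hi (Dr i l1 (Dr (i+1) hi p)) v
    have hvss : v * s * s = v := by rw [mul_assoc, Aux.sT_mul_self l1, mul_one]
    have hvtt : v * t * t = v := by rw [mul_assoc, Aux.sT_mul_self hi, mul_one]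
    have hvb : v * t * s * t = v * s * t * s := by
      have hb := Aux.sT_braid l1 hi
      simp only [← hsdef, ← htdef] at hb
      simp only [mul_assoc] at hb ⊢
      rw [← hb]
    have H1 := E3 v
    have H2 := E2 v
    have H3 : Dr i l1 p (v * s) - Dr i l1 p (v * s * t)
        = (X (v ⟨i+1+1, hi⟩) - X (v ⟨i, l0⟩) : Pol n) * Dr (i+1) hi (Dr i l1 p) (v * s) := by
      have h := E2 (v * s)
      rw [Perm.mul_apply, Perm.mul_apply, hsy, hsz] at h
      exact h
    have H4 := E1 v
    have H5 : p (v * t) - p (v * t * s)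
        = (X (v ⟨i+1+1, hi⟩) - X (v ⟨i, l0⟩) : Pol n) * Dr i l1 p (v * t) := by
      have h := E1 (v * t)
      rw [Perm.mul_apply, Perm.mul_apply, htx, hty] at h
      exact h
    have H6 : p (v * s) - p v
        = (X (v ⟨i, l0⟩) - X (v ⟨i+1, l1⟩) : Pol n) * Dr i l1 p (v * s) := by
      have h := E1 (v * s)
      rw [hvss, Perm.mul_apply, Perm.mul_apply, hsx, hsy] at h
      exact h
    have H7 : p (v * s * t) - p (v * s * t * s)
        = (X (v ⟨i+1+1, hi⟩) - X (v ⟨i+1, l1⟩) : Pol n) * Dr i l1 p (v * s * t) := by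
      have h := E1 (v * s * t)
      rw [Perm.mul_apply, Perm.mul_apply, Perm.mul_apply, Perm.mul_apply, htx, hsx,
        hty, hsz] at h
      exact h
    have K1 := F3 v
    have K2 := F2 v
    have K3 : Dr (i+1) hi p (v * t) - Dr (i+1) hi p (v * t * s)
        = (X (v ⟨i+1+1, hi⟩) - X (v ⟨i, l0⟩) : Pol n) * Dr i l1 (Dr (i+1) hi p) (v * t) := by
      have h := F2 (v * t)
      rw [Perm.mul_apply, Perm.mul_apply, htx, hty] at h
      exact h
    have K4 := F1 v
    have K5 : p (v * s) - p (v * s * t)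
        = (X (v ⟨i+1+1, hi⟩) - X (v ⟨i, l0⟩) : Pol n) * Dr (i+1) hi p (v * s) := by
      have h := F1 (v * s)
      rw [Perm.mul_apply, Perm.mul_apply, hsy, hsz] at h
      exact h
    have K6 : p (v * t) - p v
        = (X (v ⟨i+1, l1⟩) - X (v ⟨i+1+1, hi⟩) : Pol n) * Dr (i+1) hi p (v * t) := by
      have h := F1 (v * t)
      rw [hvtt, Perm.mul_apply, Perm.mul_apply, hty, htz] at h
      exact h
    have K7 : p (v * t * s) - p (v * s * t * s)
        = (X (v ⟨i+1, l1⟩) - X (v ⟨i, l0⟩) : Pol n) * Dr (i+1) hi p (v * t * s) := by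
      have h := F1 (v * t * s)
      rw [hvb, Perm.mul_apply, Perm.mul_apply, Perm.mul_apply, Perm.mul_apply,
        hsy, htx, hsz, htz] at h
      exact h
    have key : ((X (v ⟨i+1, l1⟩) - X (v ⟨i, l0⟩) : Pol n) * (X (v ⟨i+1, l1⟩) - X (v ⟨i, l0⟩))
          * (X (v ⟨i+1+1, hi⟩) - X (v ⟨i+1, l1⟩)) * (X (v ⟨i+1+1, hi⟩) - X (v ⟨i+1, l1⟩))
          * (X (v ⟨i+1+1, hi⟩) - X (v ⟨i, l0⟩)))
          * Dr i l1 (Dr (i+1) hi (Dr i l1 p)) v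
        = ((X (v ⟨i+1, l1⟩) - X (v ⟨i, l0⟩) : Pol n) * (X (v ⟨i+1, l1⟩) - X (v ⟨i, l0⟩))
          * (X (v ⟨i+1+1, hi⟩) - X (v ⟨i+1, l1⟩)) * (X (v ⟨i+1+1, hi⟩) - X (v ⟨i+1, l1⟩))
          * (X (v ⟨i+1+1, hi⟩) - X (v ⟨i, l0⟩)))
          * Dr (i+1) hi (Dr i l1 (Dr (i+1) hi p)) v := by
      linear_combination
        (-(X (v ⟨i+1+1, hi⟩) - X (v ⟨i+1, l1⟩) : Pol n)) *
          ((X (v ⟨i+1, l1⟩) - X (v ⟨i, l0⟩) : Pol n) * (X (v ⟨i+1+1, hi⟩) - X (v ⟨i+1, l1⟩))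
              * (X (v ⟨i+1+1, hi⟩) - X (v ⟨i, l0⟩)) * H1
            + (X (v ⟨i+1, l1⟩) - X (v ⟨i, l0⟩) : Pol n)
              * (X (v ⟨i+1+1, hi⟩) - X (v ⟨i, l0⟩)) * H2
            - (X (v ⟨i+1, l1⟩) - X (v ⟨i, l0⟩) : Pol n)
              * (X (v ⟨i+1+1, hi⟩) - X (v ⟨i+1, l1⟩)) * H3
            + (X (v ⟨i+1+1, hi⟩) - X (v ⟨i, l0⟩) : Pol n) * H4
            - (X (v ⟨i+1, l1⟩) - X (v ⟨i, l0⟩) : Pol n) * H5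
            + (X (v ⟨i+1+1, hi⟩) - X (v ⟨i+1, l1⟩) : Pol n) * H6
            + (X (v ⟨i+1, l1⟩) - X (v ⟨i, l0⟩) : Pol n) * H7)
        + (X (v ⟨i+1, l1⟩) - X (v ⟨i, l0⟩) : Pol n) *
          ((X (v ⟨i+1, l1⟩) - X (v ⟨i, l0⟩) : Pol n) * (X (v ⟨i+1+1, hi⟩) - X (v ⟨i+1, l1⟩))
              * (X (v ⟨i+1+1, hi⟩) - X (v ⟨i, l0⟩)) * K1
            + (X (v ⟨i+1+1, hi⟩) - X (v ⟨i+1, l1⟩) : Pol n)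
              * (X (v ⟨i+1+1, hi⟩) - X (v ⟨i, l0⟩)) * K2
            - (X (v ⟨i+1, l1⟩) - X (v ⟨i, l0⟩) : Pol n)
              * (X (v ⟨i+1+1, hi⟩) - X (v ⟨i+1, l1⟩)) * K3
            + (X (v ⟨i+1+1, hi⟩) - X (v ⟨i, l0⟩) : Pol n) * K4
            - (X (v ⟨i+1+1, hi⟩) - X (v ⟨i+1, l1⟩) : Pol n) * K5
            + (X (v ⟨i+1, l1⟩) - X (v ⟨i, l0⟩) : Pol n) * K6
            + (X (v ⟨i+1+1, hi⟩) - X (v ⟨i+1, l1⟩) : Pol n) * K7)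
    refine mul_left_cancel₀ ?_ key
    have hA : (X (v ⟨i+1, l1⟩) - X (v ⟨i, l0⟩) : Pol n) ≠ 0 :=
      Aux.Xne (v.injective.ne (Aux.fne (by omega)))
    have hB : (X (v ⟨i+1+1, hi⟩) - X (v ⟨i+1, l1⟩) : Pol n) ≠ 0 :=
      Aux.Xne (v.injective.ne (Aux.fne (by omega)))
    have hC : (X (v ⟨i+1+1, hi⟩) - X (v ⟨i, l0⟩) : Pol n) ≠ 0 :=
      Aux.Xne (v.injective.ne (Aux.fne (by omega)))
    exact mul_ne_zero (mul_ne_zero (mul_ne_zero (mul_ne_zero hA hA) hB) hB) hC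
  -- Part 7 : δᵢ∂ⱼ = ∂ⱼδᵢ
  · intro i j hi hj p hp
    have l0i : i < n := by omega
    have l0j : j < n := by omega
    obtain ⟨gr, er'⟩ := hDr j hj p hp
    obtain ⟨-, e2'⟩ := hDl i hi _ gr
    obtain ⟨gl, el'⟩ := hDl i hi p hp
    obtain ⟨-, f2'⟩ := hDr j hj _ gl
    set s := sT n i hi with hsdef
    set t := sT n j hj with htdef
    have hssx : ∀ x : Fin n, s (s x) = x := fun x => by
      rw [← Perm.mul_apply, Aux.sT_mul_self hi, Perm.one_apply]
    have Er : ∀ u, p u - p (u * t)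
        = (X (u ⟨j+1, hj⟩) - X (u ⟨j, l0j⟩) : Pol n) * Dr j hj p u := er'
    have El : ∀ u, p u - pact s (p (s * u))
        = (X ⟨i, l0i⟩ - X ⟨i+1, hi⟩ : Pol n) * Dl i hi p u := el'
    funext v
    have H1 : Dr j hj p v - pact s (Dr j hj p (s * v))
        = (X ⟨i, l0i⟩ - X ⟨i+1, hi⟩ : Pol n) * Dl i hi (Dr j hj p) v := e2' v
    have H2 := Er v
    have H3 : pact s (p (s * v)) - pact s (p (s * v * t))
        = (X (v ⟨j+1, hj⟩) - X (v ⟨j, l0j⟩) : Pol n) * pact s (Dr j hj p (s * v)) := by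
      have h := congrArg (pact s) (Er (s * v))
      rw [Aux.pact_sub, Aux.pact_mul, Aux.pact_sub, Aux.pact_X, Aux.pact_X,
        Perm.mul_apply, Perm.mul_apply, hssx, hssx] at h
      exact h
    have K1 : Dl i hi p v - Dl i hi p (v * t)
        = (X (v ⟨j+1, hj⟩) - X (v ⟨j, l0j⟩) : Pol n) * Dr j hj (Dl i hi p) v := f2' v
    have K2 := El v
    have K3 : p (v * t) - pact s (p (s * v * t))
        = (X ⟨i, l0i⟩ - X ⟨i+1, hi⟩ : Pol n) * Dl i hi p (v * t) := by
      have h := El (v * t)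
      rw [← mul_assoc] at h
      exact h
    have key : ((X ⟨i, l0i⟩ - X ⟨i+1, hi⟩ : Pol n) * (X (v ⟨j+1, hj⟩) - X (v ⟨j, l0j⟩)))
          * Dl i hi (Dr j hj p) v
        = ((X ⟨i, l0i⟩ - X ⟨i+1, hi⟩ : Pol n) * (X (v ⟨j+1, hj⟩) - X (v ⟨j, l0j⟩)))
          * Dr j hj (Dl i hi p) v := by
      linear_combination (-(X (v ⟨j+1, hj⟩) - X (v ⟨j, l0j⟩) : Pol n)) * H1 - H2 + H3
        + (X ⟨i, l0i⟩ - X ⟨i+1, hi⟩ : Pol n) * K1 + K2 - K3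
    exact mul_left_cancel₀
      (mul_ne_zero (Aux.Xne (Aux.fne (by omega)))
        (Aux.Xne (v.injective.ne (Aux.fne (by omega))))) key
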